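/- Let S ⊆ S² and let R be the union of all open sets dominating S (i.e., R = {p ∈ S² : p has an open neighborhood D such that every great circle meeting D meets S}). Then every connected component of R contains no pair of antipodal points, provided S contains no pair of orthogonal points. -/

import Mathlib

/-- The unit sphere in `ℝ³`. -/
def sphere2 : Set (EuclideanSpace ℝ (Fin 3)) := {x | ‖x‖ = 1}

/-- `D` dominates `S` if `D` is a nonempty subset of the sphere, open in the
subspace topology of the sphere, and every great circle meeting `D` meets `S`. -/
def Dominates (D S : Set (EuclideanSpace ℝ (Fin 3))) : Prop :=
  D.Nonempty ∧ D ⊆ sphere2 ∧ (∃ U, IsOpen U ∧ D = U ∩ sphere2) ∧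
    ∀ n : EuclideanSpace ℝ (Fin 3), ‖n‖ = 1 →
      (∃ x ∈ D, (inner ℝ x n : ℝ) = 0) → ∃ y ∈ S, (inner ℝ y n : ℝ) = 0

theorem stmt_13 (S : Set (EuclideanSpace ℝ (Fin 3))) (hS : S ⊆ sphere2)
    (horth : ∀ u ∈ S, ∀ v ∈ S, (inner ℝ u v : ℝ) ≠ 0)
    (R : Set (EuclideanSpace ℝ (Fin 3)))
    (hR : R = {p | ∃ D, p ∈ D ∧ Dominates D S}) :
    ∀ x ∈ R, ∀ y ∈ connectedComponentIn R x, -y ∉ connectedComponentIn R x := by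
  intro x hx y hy hny
  have hyR : y ∈ R := connectedComponentIn_subset R x hy
  rw [hR] at hyR
  obtain ⟨D, hyD, _, hDsub, _, hDkey⟩ := hyR
  have hy2 : ‖y‖ = 1 := hDsub hyD
  have hyne : y ≠ 0 := by intro h; rw [h, norm_zero] at hy2; norm_num at hy2
  -- find a unit vector orthogonal to y
  obtain ⟨n, hn1, hyn⟩ : ∃ n : EuclideanSpace ℝ (Fin 3), ‖n‖ = 1 ∧ (inner ℝ y n : ℝ) = 0 := by
    have hne : ((ℝ ∙ y)ᗮ : Submodule ℝ (EuclideanSpace ℝ (Fin 3))) ≠ ⊥ := by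
      intro hb
      rw [Submodule.orthogonal_eq_bot_iff] at hb
      have h := hb
      have h1 : Module.finrank ℝ (ℝ ∙ y) = 3 := by
        rw [h]
        simp [finrank_euclideanSpace]
      rw [finrank_span_singleton hyne] at h1
      norm_num at h1
    obtain ⟨v, hvmem, hv0⟩ := Submodule.exists_mem_ne_zero_of_ne_bot hne
    refine ⟨‖v‖⁻¹ • v, ?_, ?_⟩
    · rw [norm_smul, norm_inv, norm_norm, inv_mul_cancel₀ (norm_ne_zero_iff.mpr hv0)]
    · rw [inner_smul_right]
      have := (Submodule.mem_orthogonal _ v).mp hvmem y (Submodule.mem_span_singleton_self y)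
      rw [this, mul_zero]
  obtain ⟨s₀, hs₀S, _⟩ := hDkey n hn1 ⟨y, hyD, hyn⟩
  have hs₀2 : ‖s₀‖ = 1 := hS hs₀S
  -- intermediate value: some p in the component is orthogonal to s₀
  set f : EuclideanSpace ℝ (Fin 3) → ℝ := fun p => inner ℝ p s₀ with hf
  have hcont : Continuous f := continuous_id.inner continuous_const
  have hpre := isPreconnected_connectedComponentIn (F := R) (x := x)
  have hneg : f (-y) = - f y := by simp [hf, inner_neg_left]
  have h0 : (0:ℝ) ∈ f '' connectedComponentIn R x := by
    rcases le_total (f y) 0 with h | h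
    · exact hpre.intermediate_value hy hny hcont.continuousOn ⟨h, by rw [hneg]; linarith⟩
    · exact hpre.intermediate_value hny hy hcont.continuousOn ⟨by rw [hneg]; linarith, h⟩
  obtain ⟨p, hpC, hp0⟩ := h0
  have hpR : p ∈ R := connectedComponentIn_subset R x hpC
  rw [hR] at hpR
  obtain ⟨D', hpD', _, _, _, hkey'⟩ := hpR
  obtain ⟨s, hsS, hs⟩ := hkey' s₀ hs₀2 ⟨p, hpD', hp0⟩
  exact horth s hsS s₀ hs₀S hs
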